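/- Let (α,μ) ∈ D_M^↑ × D_ℝ^↑ and suppose (ξ,β,ι) ∈ D_M × D_M^↑ × D_ℝ^↑ solves the MVSP for (α,μ). Then (t ↦ ξ_t[0,∞), ι) = Γ[t ↦ α_t[0,∞) − μ(t)], and for every x ∈ [0,∞), (t ↦ ξ_t[0,x], t ↦ β_t((x,∞))) = Γ[t ↦ α_t[0,x] − μ(t) + ι(t)]. -/

import Mathlib

open MeasureTheory Filter Set
open scoped NNReal ENNReal BoundedContinuousFunction Topology

noncomputable section

/-- Càdlàg on `[0,∞)`: right-continuous at every `t ≥ 0`, with left limits at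
every `t > 0` (along `[0,t)`). -/
def CadlagOn {E : Type*} [TopologicalSpace E] (f : ℝ → E) : Prop :=
  (∀ t : ℝ, 0 ≤ t → ContinuousWithinAt f (Set.Ici t) t) ∧
  (∀ t : ℝ, 0 < t → ∃ l : E, Filter.Tendsto f (nhdsWithin t (Set.Ico 0 t)) (nhds l))

/-- `D_ℝ`: real-valued càdlàg paths on `[0,∞)`. -/
def DR (f : ℝ → ℝ) : Prop := CadlagOn f

/-- `D_ℝ^↑`: nonnegative nondecreasing real-valued càdlàg paths on `[0,∞)`. -/
def DRup (f : ℝ → ℝ) : Prop :=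
  CadlagOn f ∧ (∀ t : ℝ, 0 ≤ t → 0 ≤ f t) ∧ MonotoneOn f (Set.Ici 0)

/-- `D_M`: càdlàg paths with values in the space of finite nonnegative measures
on `[0,∞)`, equipped with the topology of weak convergence. -/
def DM (ζ : ℝ → FiniteMeasure ℝ≥0) : Prop := CadlagOn ζ

/-- `D_M^↑`: paths in `D_M` such that `t ↦ ∫ f dζ_t` is nondecreasing for every
nonnegative bounded continuous `f` on `[0,∞)`. -/
def DMup (ζ : ℝ → FiniteMeasure ℝ≥0) : Prop :=
  CadlagOn ζ ∧
  ∀ f : ℝ≥0 →ᵇ ℝ≥0, MonotoneOn (fun t => (ζ t).testAgainstNN f) (Set.Ici 0)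

/-- First component of the Skorokhod map on the half-line:
`Γ₁[ψ](t) = ψ(t) − inf_{s∈[0,t]} (ψ(s) ∧ 0)`. -/
def Gamma1 (ψ : ℝ → ℝ) (t : ℝ) : ℝ :=
  ψ t - sInf ((fun s => min (ψ s) 0) '' Set.Icc 0 t)

/-- Second component of the Skorokhod map on the half-line: `Γ₂[ψ] = Γ₁[ψ] − ψ`. -/
def Gamma2 (ψ : ℝ → ℝ) (t : ℝ) : ℝ := Gamma1 ψ t - ψ t

/-- Extension of `g : [0,∞) → ℝ` by `0` on `(-∞,0)`. -/
def lsExt (g : ℝ → ℝ) : ℝ → ℝ := fun t => if t < 0 then 0 else g t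

/- The Lebesgue–Stieltjes measure `m^g(B) = g(0)δ₀(B) + ∫_{(0,∞)} 1_B dg` of a
nonnegative nondecreasing right-continuous `g` on `[0,∞)`, realized as the
Stieltjes measure of the extension of `g` by `0` on `(-∞,0)`. -/
open scoped Classical in
def lsMeasure (g : ℝ → ℝ) : Measure ℝ :=
  if h : Monotone (lsExt g) ∧ ∀ t, ContinuousWithinAt (lsExt g) (Set.Ici t) t then
    StieltjesFunction.measure ⟨lsExt g, h.1, h.2⟩
  else 0

/-- The measure-valued Skorokhod problem (MVSP): `(ξ,β,ι)` solves the MVSP for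
the data `(α,μ)`. -/
def SolvesMVSP (α : ℝ → FiniteMeasure ℝ≥0) (μ : ℝ → ℝ)
    (ξ β : ℝ → FiniteMeasure ℝ≥0) (ι : ℝ → ℝ) : Prop :=
  (∀ x : ℝ≥0, ∀ t : ℝ, 0 ≤ t →
    (ξ t (Set.Iic x) : ℝ) = (α t (Set.Iic x) : ℝ) - μ t + (β t (Set.Ioi x) : ℝ) + ι t) ∧
  (∀ x : ℝ≥0, ∀ᵐ t ∂(lsMeasure (fun s => (β s (Set.Ioi x) : ℝ))), (ξ t (Set.Iic x) : ℝ) = 0) ∧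
  (∀ x : ℝ≥0, ∀ᵐ t ∂(lsMeasure ι), (ξ t (Set.Iic x) : ℝ) = 0) ∧
  (∀ t : ℝ, 0 ≤ t → (β t Set.univ : ℝ) + ι t = μ t)

/-- System (30): `(ξ,β,ι)` solves the MVSP for `(α, μ+ρ)` and `ξ_t[0,t) = 0`
for every `t > 0`. -/
def Solves30 (α : ℝ → FiniteMeasure ℝ≥0) (μ : ℝ → ℝ)
    (ξ β : ℝ → FiniteMeasure ℝ≥0) (ι ρ : ℝ → ℝ) : Prop :=
  SolvesMVSP α (fun t => μ t + ρ t) ξ β ι ∧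
  ∀ t : ℝ, 0 < t → (ξ t (Set.Iio (Real.toNNReal t)) : ℝ) = 0

/-- A minimal solution of system (30): a solution (lying in the appropriate
path spaces) whose reneging function `ρ` is pointwise below that of any other
solution. -/
def IsMinimalSol30 (α : ℝ → FiniteMeasure ℝ≥0) (μ : ℝ → ℝ)
    (ξ β : ℝ → FiniteMeasure ℝ≥0) (ι ρ : ℝ → ℝ) : Prop :=
  (DM ξ ∧ DMup β ∧ DRup ι ∧ DRup ρ ∧ Solves30 α μ ξ β ι ρ) ∧
  ∀ (ξ' β' : ℝ → FiniteMeasure ℝ≥0) (ι' ρ' : ℝ → ℝ),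
    DM ξ' → DMup β' → DRup ι' → DRup ρ' → Solves30 α μ ξ' β' ι' ρ' →
    ∀ t : ℝ, 0 ≤ t → ρ t ≤ ρ' t

/-- The (topological) support of a finite measure on `[0,∞)`: the set of points
all of whose open neighborhoods have positive measure. -/
def measSupport (ν : FiniteMeasure ℝ≥0) : Set ℝ≥0 :=
  {x : ℝ≥0 | ∀ u : Set ℝ≥0, IsOpen u → x ∈ u → ν u ≠ 0}

/-- `σ(ν) = inf supp[ν]`, with value `∞` when `ν = 0`. -/
def sigmaOf (ν : FiniteMeasure ℝ≥0) : ℝ≥0∞ :=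
  sInf ((fun x : ℝ≥0 => (x : ℝ≥0∞)) '' measSupport ν)

/-- Assumption A on the data `(α,μ)`. -/
def AssumptionA (α : ℝ → FiniteMeasure ℝ≥0) (μ : ℝ → ℝ) : Prop :=
  (∃ (ξ0 : FiniteMeasure ℝ≥0) (a0 : ℝ → FiniteMeasure ℝ≥0)
      (lam : ℝ → ℝ) (ν : FiniteMeasure ℝ≥0),
    (∀ x : ℝ≥0, ξ0 {x} = 0) ∧
    ContinuousOn a0 (Set.Ici 0) ∧ DMup a0 ∧
    (∀ t : ℝ, 0 ≤ t → ∀ x : ℝ≥0, a0 t {x} = 0) ∧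
    Measurable lam ∧ (∀ s : ℝ, 0 ≤ s → 0 ≤ lam s) ∧
    (∀ t : ℝ, 0 ≤ t → α t = a0 t + ξ0) ∧
    (∀ t : ℝ, 0 ≤ t → ∀ x : ℝ≥0, (a0 t (Set.Iic x) : ℝ) =
      ∫ s in Set.Icc (0:ℝ) t,
        (if s ≤ (x:ℝ) then lam s * (ν (Set.Iic (Real.toNNReal ((x:ℝ) - s))) : ℝ) else 0)) ∧
    (∀ t : ℝ, 0 ≤ t →
      Filter.Tendsto (fun x : ℝ≥0 =>
          sSup ((fun s => lam s * (ν (Set.Iic x) : ℝ)) '' Set.Icc (0:ℝ) t))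
        (nhdsWithin 0 (Set.Ioi 0)) (nhds 0))) ∧
  (∃ μ0 m : ℝ → ℝ,
    ContinuousOn μ0 (Set.Ici 0) ∧ (∀ t : ℝ, 0 ≤ t → 0 ≤ μ0 t) ∧
    MonotoneOn μ0 (Set.Ici 0) ∧
    Measurable m ∧ (∀ s : ℝ, 0 ≤ s → 0 ≤ m s) ∧
    (∀ t : ℝ, 0 ≤ t → MeasureTheory.IntegrableOn m (Set.Icc 0 t)) ∧
    (∀ t : ℝ, 0 ≤ t → 0 < sInf (m '' Set.Icc (0:ℝ) t)) ∧
    (∀ t : ℝ, 0 ≤ t → μ t = μ0 t + ∫ s in Set.Icc (0:ℝ) t, m s))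

namespace MVSPAux

lemma lsExt_mono {g : ℝ → ℝ} (h0 : ∀ t : ℝ, 0 ≤ t → 0 ≤ g t)
    (hm : MonotoneOn g (Set.Ici 0)) : Monotone (lsExt g) := by
  intro a b hab
  unfold lsExt
  split_ifs with ha hb hb
  · exact le_refl 0
  · exact h0 b (not_lt.mp hb)
  · exact absurd (hab.trans_lt hb) ha
  · exact hm (not_lt.mp ha) (not_lt.mp hb) hab

lemma lsExt_rc {g : ℝ → ℝ} (hc : ∀ t : ℝ, 0 ≤ t → ContinuousWithinAt g (Set.Ici t) t) :
    ∀ t, ContinuousWithinAt (lsExt g) (Set.Ici t) t := by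
  intro t
  rcases lt_or_ge t 0 with ht | ht
  · have h' : (fun _ : ℝ => (0 : ℝ)) =ᶠ[𝓝 t] lsExt g := by
      filter_upwards [Iio_mem_nhds ht] with y hy
      simp [lsExt, Set.mem_Iio.mp hy]
    exact (continuousAt_const.congr h').continuousWithinAt
  · refine (hc t ht).congr (fun y hy => ?_) ?_
    · simp [lsExt, not_lt.mpr (ht.trans hy)]
    · simp [lsExt, not_lt.mpr ht]

lemma lsMeasure_eq {g : ℝ → ℝ} (h1 : Monotone (lsExt g))
    (h2 : ∀ t, ContinuousWithinAt (lsExt g) (Set.Ici t) t) :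
    lsMeasure g = StieltjesFunction.measure ⟨lsExt g, h1, h2⟩ := by
  classical
  unfold lsMeasure
  rw [dif_pos ⟨h1, h2⟩]

lemma leftLim_lsExt_zero (g : ℝ → ℝ) : Function.leftLim (lsExt g) 0 = 0 := by
  refine leftLim_eq_of_tendsto ?_
  refine Tendsto.congr' ?_ (tendsto_const_nhds (x := (0:ℝ)))
  filter_upwards [self_mem_nhdsWithin] with y (hy : y < 0)
  simp [lsExt, hy]

lemma lsMeasure_Icc {g : ℝ → ℝ} (h1 : Monotone (lsExt g))
    (h2 : ∀ t, ContinuousWithinAt (lsExt g) (Set.Ici t) t) {t : ℝ} (ht : 0 ≤ t) :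
    lsMeasure g (Set.Icc 0 t) = ENNReal.ofReal (g t) := by
  rw [lsMeasure_eq h1 h2, StieltjesFunction.measure_Icc]
  show ENNReal.ofReal (lsExt g t - Function.leftLim (lsExt g) 0) = _
  rw [leftLim_lsExt_zero]
  simp [lsExt, not_lt.mpr ht]

lemma lsMeasure_Ico {g : ℝ → ℝ} (h1 : Monotone (lsExt g))
    (h2 : ∀ t, ContinuousWithinAt (lsExt g) (Set.Ici t) t) (b : ℝ) :
    lsMeasure g (Set.Ico 0 b) = ENNReal.ofReal (Function.leftLim (lsExt g) b) := by
  rw [lsMeasure_eq h1 h2, StieltjesFunction.measure_Ico]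
  show ENNReal.ofReal (Function.leftLim (lsExt g) b - Function.leftLim (lsExt g) 0) = _
  rw [leftLim_lsExt_zero, sub_zero]

end MVSPAux

namespace MVSPAux

/-- Key characterization: if `φ = ψ + η` on `[0,∞)` with `φ ≥ 0`, `η` nonneg
nondecreasing right-continuous, and `φ = 0` a.e. w.r.t. the Lebesgue–Stieltjes
measure of `η`, then `(φ, η) = Γ[ψ]`. -/
lemma skorokhod_char (ψ φ η : ℝ → ℝ)
    (h0 : ∀ t : ℝ, 0 ≤ t → 0 ≤ η t) (hmono : MonotoneOn η (Set.Ici 0))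
    (hrc : ∀ t : ℝ, 0 ≤ t → ContinuousWithinAt η (Set.Ici t) t)
    (heq : ∀ t : ℝ, 0 ≤ t → φ t = ψ t + η t)
    (hpos : ∀ t : ℝ, 0 ≤ t → 0 ≤ φ t)
    (hae : ∀ᵐ s ∂(lsMeasure η), φ s = 0)
    {t : ℝ} (ht : 0 ≤ t) : φ t = Gamma1 ψ t ∧ η t = Gamma2 ψ t := by
  have h1 : Monotone (lsExt η) := lsExt_mono h0 hmono
  have h2 : ∀ u, ContinuousWithinAt (lsExt η) (Set.Ici u) u := lsExt_rc hrc
  set m : Measure ℝ := lsMeasure η with hm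
  have hN : m {s | ¬ φ s = 0} = 0 := ae_iff.mp hae
  set S : Set ℝ := (fun s => min (ψ s) 0) '' Set.Icc 0 t with hS
  have hSne : S.Nonempty := ⟨min (ψ 0) 0, ⟨0, ⟨le_refl 0, ht⟩, rfl⟩⟩
  have hbd : ∀ y ∈ S, -η t ≤ y := by
    rintro y ⟨s, hs, rfl⟩
    show -η t ≤ min (ψ s) 0
    rcases le_or_gt 0 (ψ s) with h | h
    · have := h0 t ht
      rw [min_eq_right h]
      linarith
    · show -η t ≤ min (ψ s) 0
      rw [min_eq_left h.le]
      have hφ := hpos s hs.1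
      have hη : η s ≤ η t := hmono hs.1 ht hs.2
      have := heq s hs.1
      linarith
  have hbdd : BddBelow S := ⟨-η t, hbd⟩
  have hlow : -η t ≤ sInf S := le_csInf hSne hbd
  -- upper bound
  have hupp : ∀ ε : ℝ, 0 < ε → sInf S ≤ -η t + ε := by
    intro ε hε
    rcases le_or_gt (η t) ε with hce | hce
    · have h0mem : min (ψ 0) 0 ∈ S := ⟨0, ⟨le_refl 0, ht⟩, rfl⟩
      have : sInf S ≤ min (ψ 0) 0 := csInf_le hbdd h0mem
      have h2' : min (ψ 0) 0 ≤ 0 := min_le_right _ _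
      linarith
    · set c : ℝ := η t - ε with hc
      have hc0 : 0 ≤ c := by linarith
      have hclt : c < η t := by linarith
      -- claim: ∃ s ∈ [0,t], φ s = 0 ∧ c < η s
      have hclaim : ∃ s, s ∈ Set.Icc 0 t ∧ φ s = 0 ∧ c < η s := by
        by_contra hcon
        push_neg at hcon
        set A : Set ℝ := {s | s ∈ Set.Icc 0 t ∧ η s ≤ c} with hA
        have hsub : Set.Icc 0 t ⊆ {s | ¬ φ s = 0} ∪ A := by
          intro s hs
          by_cases hφ : φ s = 0
          · exact Or.inr ⟨hs, hcon s hs hφ⟩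
          · exact Or.inl hφ
        have hAle : m A ≤ ENNReal.ofReal c := by
          rcases A.eq_empty_or_nonempty with hAe | hAne
          · simp [hAe]
          · have hAbdd : BddAbove A := ⟨t, fun a ha => ha.1.2⟩
            set s' : ℝ := sSup A with hs'
            have hs'0 : 0 ≤ s' := by
              obtain ⟨a, ha⟩ := hAne
              exact ha.1.1.trans (le_csSup hAbdd ha)
            by_cases hmem : s' ∈ A
            · have : A ⊆ Set.Icc 0 s' := fun a ha => ⟨ha.1.1, le_csSup hAbdd ha⟩
              calc m A ≤ m (Set.Icc 0 s') := measure_mono this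
                _ = ENNReal.ofReal (η s') := lsMeasure_Icc h1 h2 hs'0
                _ ≤ ENNReal.ofReal c := ENNReal.ofReal_le_ofReal hmem.2
            · have hAsub : A ⊆ Set.Ico 0 s' := by
                intro a ha
                refine ⟨ha.1.1, lt_of_le_of_ne (le_csSup hAbdd ha) ?_⟩
                rintro rfl; exact hmem ha
              have hll : Function.leftLim (lsExt η) s' ≤ c := by
                have hne : (𝓝[<] s') ≠ ⊥ := NeBot.ne inferInstance
                rw [h1.leftLim_eq_sSup]
                refine csSup_le (by simpa using Set.nonempty_Iio) ?_
                rintro y ⟨u, hu, rfl⟩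
                rcases lt_or_ge u 0 with hu0 | hu0
                · simp [lsExt, hu0, hc0]
                · obtain ⟨a, haA, hua⟩ := exists_lt_of_lt_csSup hAne hu
                  have : η u ≤ η a := hmono hu0 haA.1.1 hua.le
                  simpa [lsExt, not_lt.mpr hu0] using this.trans haA.2
              calc m A ≤ m (Set.Ico 0 s') := measure_mono hAsub
                _ = ENNReal.ofReal (Function.leftLim (lsExt η) s') := lsMeasure_Ico h1 h2 s'
                _ ≤ ENNReal.ofReal c := ENNReal.ofReal_le_ofReal hll
        have : ENNReal.ofReal (η t) ≤ ENNReal.ofReal c := by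
          calc ENNReal.ofReal (η t) = m (Set.Icc 0 t) := (lsMeasure_Icc h1 h2 ht).symm
            _ ≤ m ({s | ¬ φ s = 0} ∪ A) := measure_mono hsub
            _ ≤ m {s | ¬ φ s = 0} + m A := measure_union_le _ _
            _ ≤ 0 + ENNReal.ofReal c := by rw [hN]; exact add_le_add le_rfl hAle
            _ = ENNReal.ofReal c := by rw [zero_add]
        rw [ENNReal.ofReal_le_ofReal_iff hc0] at this
        linarith
      obtain ⟨s, hs, hφs, hηs⟩ := hclaim
      have hψs : ψ s = -η s := by have := heq s hs.1; linarith
      have hmin : min (ψ s) 0 = ψ s := min_eq_left (by rw [hψs]; linarith [h0 s hs.1])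
      have hmem : min (ψ s) 0 ∈ S := ⟨s, hs, rfl⟩
      calc sInf S ≤ min (ψ s) 0 := csInf_le hbdd hmem
        _ = -η s := by rw [hmin, hψs]
        _ ≤ -η t + ε := by linarith
  have hInf : sInf S = -η t :=
    le_antisymm (le_of_forall_pos_le_add hupp) hlow
  constructor
  · rw [heq t ht]; unfold Gamma1; rw [← hS, hInf]; ring
  · unfold Gamma2 Gamma1; rw [← hS, hInf]; ring

end MVSPAux

namespace MVSPAux

/-- Bounded continuous approximation to the indicator of `Ioi x` in `ℝ≥0`. -/
def approxIoi (x : ℝ≥0) (n : ℕ) : ℝ≥0 →ᵇ ℝ≥0 :=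
  ⟨⟨fun y => min 1 ((n : ℝ≥0) * (y - x)),
    continuous_const.min (continuous_const.mul (continuous_id.sub continuous_const))⟩,
    ⟨1, fun a b => by
      simp only [ContinuousMap.coe_mk]
      rw [NNReal.dist_eq]
      have h1 : ((min 1 ((n : ℝ≥0) * (a - x)) : ℝ≥0) : ℝ) ≤ 1 := by
        exact_mod_cast min_le_left _ _
      have h2 : ((min 1 ((n : ℝ≥0) * (b - x)) : ℝ≥0) : ℝ) ≤ 1 := by
        exact_mod_cast min_le_left _ _
      have h3 : (0:ℝ) ≤ ((min 1 ((n : ℝ≥0) * (a - x)) : ℝ≥0) : ℝ) := NNReal.coe_nonneg _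
      have h4 : (0:ℝ) ≤ ((min 1 ((n : ℝ≥0) * (b - x)) : ℝ≥0) : ℝ) := NNReal.coe_nonneg _
      rw [abs_sub_le_iff]; constructor <;> linarith⟩⟩

/-- Bounded continuous approximation to the indicator of `Iio u` in `ℝ≥0`. -/
def approxIio (u : ℝ≥0) (n : ℕ) : ℝ≥0 →ᵇ ℝ≥0 :=
  ⟨⟨fun y => min 1 ((n : ℝ≥0) * (u - y)),
    continuous_const.min (continuous_const.mul (continuous_const.sub continuous_id))⟩,
    ⟨1, fun a b => by
      simp only [ContinuousMap.coe_mk]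
      rw [NNReal.dist_eq]
      have h1 : ((min 1 ((n : ℝ≥0) * (u - a)) : ℝ≥0) : ℝ) ≤ 1 := by
        exact_mod_cast min_le_left _ _
      have h2 : ((min 1 ((n : ℝ≥0) * (u - b)) : ℝ≥0) : ℝ) ≤ 1 := by
        exact_mod_cast min_le_left _ _
      have h3 : (0:ℝ) ≤ ((min 1 ((n : ℝ≥0) * (u - a)) : ℝ≥0) : ℝ) := NNReal.coe_nonneg _
      have h4 : (0:ℝ) ≤ ((min 1 ((n : ℝ≥0) * (u - b)) : ℝ≥0) : ℝ) := NNReal.coe_nonneg _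
      rw [abs_sub_le_iff]; constructor <;> linarith⟩⟩

lemma iSup_approx_aux {d : ℝ≥0} :
    (⨆ n : ℕ, ((min 1 ((n : ℝ≥0) * d) : ℝ≥0) : ℝ≥0∞)) = if d = 0 then 0 else 1 := by
  split_ifs with hd
  · simp [hd]
  · apply le_antisymm
    · exact iSup_le fun n => by exact_mod_cast min_le_left _ _
    · obtain ⟨n, hn⟩ := exists_nat_ge d⁻¹
      have hn' : (1:ℝ≥0) ≤ (n : ℝ≥0) * d := by
        calc (1:ℝ≥0) = d⁻¹ * d := (inv_mul_cancel₀ hd).symm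
          _ ≤ (n : ℝ≥0) * d := mul_le_mul_left hn d
      have : (min 1 ((n : ℝ≥0) * d) : ℝ≥0) = 1 := min_eq_left hn'
      calc (1 : ℝ≥0∞) = ((min 1 ((n : ℝ≥0) * d) : ℝ≥0) : ℝ≥0∞) := by rw [this]; simp
        _ ≤ ⨆ n : ℕ, ((min 1 ((n : ℝ≥0) * d) : ℝ≥0) : ℝ≥0∞) := le_iSup (fun n : ℕ => ((min 1 ((n : ℝ≥0) * d) : ℝ≥0) : ℝ≥0∞)) n

lemma lintegral_approxIoi (ν : Measure ℝ≥0) [IsFiniteMeasure ν] (x : ℝ≥0) :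
    (⨆ n : ℕ, ∫⁻ y, (approxIoi x n y : ℝ≥0∞) ∂ν) = ν (Set.Ioi x) := by
  rw [← lintegral_iSup (fun n => (approxIoi x n).measurable_coe_ennreal_comp)
      (fun n k hnk y => by
        show ((approxIoi x n y : ℝ≥0) : ℝ≥0∞) ≤ (approxIoi x k y : ℝ≥0∞)
        have : (approxIoi x n y : ℝ≥0) ≤ approxIoi x k y := by
          show min 1 ((n : ℝ≥0) * (y - x)) ≤ min 1 ((k : ℝ≥0) * (y - x))
          exact min_le_min le_rfl (mul_le_mul_left (by exact_mod_cast hnk) _)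
        exact_mod_cast this)]
  rw [← lintegral_indicator_one measurableSet_Ioi]
  refine lintegral_congr fun y => ?_
  show (⨆ n : ℕ, ((min 1 ((n : ℝ≥0) * (y - x)) : ℝ≥0) : ℝ≥0∞)) = _
  rw [iSup_approx_aux]
  rcases le_or_gt y x with h | h
  · simp [tsub_eq_zero_of_le h, Set.indicator_apply, not_lt.mpr h]
  · have : y - x ≠ 0 := by
      simp only [ne_eq, tsub_eq_zero_iff_le, not_le]; exact h
    simp [this, Set.indicator_apply, h]

lemma lintegral_approxIio (ν : Measure ℝ≥0) [IsFiniteMeasure ν] (u : ℝ≥0) :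
    (⨆ n : ℕ, ∫⁻ y, (approxIio u n y : ℝ≥0∞) ∂ν) = ν (Set.Iio u) := by
  rw [← lintegral_iSup (fun n => (approxIio u n).measurable_coe_ennreal_comp)
      (fun n k hnk y => by
        show ((approxIio u n y : ℝ≥0) : ℝ≥0∞) ≤ (approxIio u k y : ℝ≥0∞)
        have : (approxIio u n y : ℝ≥0) ≤ approxIio u k y := by
          show min 1 ((n : ℝ≥0) * (u - y)) ≤ min 1 ((k : ℝ≥0) * (u - y))
          exact min_le_min le_rfl (mul_le_mul_left (by exact_mod_cast hnk) _)
        exact_mod_cast this)]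
  rw [← lintegral_indicator_one measurableSet_Iio]
  refine lintegral_congr fun y => ?_
  show (⨆ n : ℕ, ((min 1 ((n : ℝ≥0) * (u - y) : ℝ≥0) : ℝ≥0)) : ℝ≥0∞) = _
  rw [iSup_approx_aux]
  rcases le_or_gt u y with h | h
  · simp [tsub_eq_zero_of_le h, Set.indicator_apply, not_lt.mpr h]
  · have : u - y ≠ 0 := by
      simp only [ne_eq, tsub_eq_zero_iff_le, not_le]; exact h
    simp [this, Set.indicator_apply, h]

end MVSPAux

namespace MVSPAux

lemma meas_Ioi_mono {ν ν' : FiniteMeasure ℝ≥0}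
    (h : ∀ f : ℝ≥0 →ᵇ ℝ≥0, ν.testAgainstNN f ≤ ν'.testAgainstNN f) (x : ℝ≥0) :
    (ν : Measure ℝ≥0) (Set.Ioi x) ≤ (ν' : Measure ℝ≥0) (Set.Ioi x) := by
  rw [← lintegral_approxIoi (ν : Measure ℝ≥0) x, ← lintegral_approxIoi (ν' : Measure ℝ≥0) x]
  refine iSup_mono fun n => ?_
  rw [← FiniteMeasure.testAgainstNN_coe_eq, ← FiniteMeasure.testAgainstNN_coe_eq]
  exact_mod_cast h _

lemma meas_Iio_mono {ν ν' : FiniteMeasure ℝ≥0}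
    (h : ∀ f : ℝ≥0 →ᵇ ℝ≥0, ν.testAgainstNN f ≤ ν'.testAgainstNN f) (u : ℝ≥0) :
    (ν : Measure ℝ≥0) (Set.Iio u) ≤ (ν' : Measure ℝ≥0) (Set.Iio u) := by
  rw [← lintegral_approxIio (ν : Measure ℝ≥0) u, ← lintegral_approxIio (ν' : Measure ℝ≥0) u]
  refine iSup_mono fun n => ?_
  rw [← FiniteMeasure.testAgainstNN_coe_eq, ← FiniteMeasure.testAgainstNN_coe_eq]
  exact_mod_cast h _

lemma meas_Iic_mono {ν ν' : FiniteMeasure ℝ≥0}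
    (h : ∀ f : ℝ≥0 →ᵇ ℝ≥0, ν.testAgainstNN f ≤ ν'.testAgainstNN f) (x : ℝ≥0) :
    (ν : Measure ℝ≥0) (Set.Iic x) ≤ (ν' : Measure ℝ≥0) (Set.Iic x) := by
  have hpos : ∀ n : ℕ, (0:ℝ≥0) < ((n:ℝ≥0)+1)⁻¹ := by
    intro n
    rw [pos_iff_ne_zero]
    simp
  have hI : ∀ n : ℕ,
      (ν : Measure ℝ≥0) (Set.Iic x) ≤ (ν' : Measure ℝ≥0) (Set.Iio (x + ((n:ℝ≥0)+1)⁻¹)) := by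
    intro n
    refine le_trans (measure_mono fun y hy => ?_) (meas_Iio_mono h _)
    exact lt_of_le_of_lt hy (lt_add_of_pos_right _ (hpos n))
  have hant : Antitone (fun n : ℕ => Set.Iio (x + ((n:ℝ≥0)+1)⁻¹)) := by
    intro n k hnk
    refine Set.Iio_subset_Iio (add_le_add_right ?_ x)
    exact inv_anti₀ (by positivity) (by exact_mod_cast Nat.succ_le_succ hnk)
  have hiInter : (⋂ n : ℕ, Set.Iio (x + ((n:ℝ≥0)+1)⁻¹)) = Set.Iic x := by
    ext y
    simp only [Set.mem_iInter, Set.mem_Iio, Set.mem_Iic]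
    constructor
    · intro hy
      by_contra hxy
      push_neg at hxy
      have hd : (0:ℝ≥0) < y - x := by
        rw [pos_iff_ne_zero]
        simp only [ne_eq, tsub_eq_zero_iff_le, not_le]
        exact hxy
      obtain ⟨n, hn⟩ := exists_nat_ge (y - x)⁻¹
      have h1 : ((n:ℝ≥0)+1)⁻¹ < y - x := by
        have : (y - x)⁻¹ < (n:ℝ≥0) + 1 := lt_of_le_of_lt hn (lt_add_one _)
        calc ((n:ℝ≥0)+1)⁻¹ < ((y - x)⁻¹)⁻¹ :=
              inv_strictAnti₀ (by positivity) this
          _ = y - x := inv_inv _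
      have := hy n
      have h2 : x + ((n:ℝ≥0)+1)⁻¹ < x + (y - x) := by
        exact add_lt_add_right h1 x
      rw [add_tsub_cancel_of_le hxy.le] at h2
      exact absurd (this.trans h2) (lt_irrefl y)
    · intro hy n
      exact lt_of_le_of_lt hy (lt_add_of_pos_right _ (hpos n))
  have htends := tendsto_measure_iInter_atTop (μ := (ν' : Measure ℝ≥0))
    (fun n => measurableSet_Iio.nullMeasurableSet) hant ⟨0, measure_ne_top _ _⟩
  rw [hiInter] at htends
  exact ge_of_tendsto htends (Eventually.of_forall hI)

lemma fm_Ioi_mono {ν ν' : FiniteMeasure ℝ≥0}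
    (h : ∀ f : ℝ≥0 →ᵇ ℝ≥0, ν.testAgainstNN f ≤ ν'.testAgainstNN f) (x : ℝ≥0) :
    (ν (Set.Ioi x) : ℝ) ≤ (ν' (Set.Ioi x) : ℝ) := by
  have := meas_Ioi_mono h x
  rw [← FiniteMeasure.ennreal_coeFn_eq_coeFn_toMeasure,
    ← FiniteMeasure.ennreal_coeFn_eq_coeFn_toMeasure] at this
  exact_mod_cast this

lemma fm_Iic_mono {ν ν' : FiniteMeasure ℝ≥0}
    (h : ∀ f : ℝ≥0 →ᵇ ℝ≥0, ν.testAgainstNN f ≤ ν'.testAgainstNN f) (x : ℝ≥0) :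
    (ν (Set.Iic x) : ℝ) ≤ (ν' (Set.Iic x) : ℝ) := by
  have := meas_Iic_mono h x
  rw [← FiniteMeasure.ennreal_coeFn_eq_coeFn_toMeasure,
    ← FiniteMeasure.ennreal_coeFn_eq_coeFn_toMeasure] at this
  exact_mod_cast this

lemma fm_partition (ν : FiniteMeasure ℝ≥0) (x : ℝ≥0) :
    (ν.mass : ℝ) = (ν (Set.Iic x) : ℝ) + (ν (Set.Ioi x) : ℝ) := by
  have h := measure_union (μ := (ν : Measure ℝ≥0)) (Set.Iic_disjoint_Ioi (le_refl x))
    measurableSet_Ioi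
  rw [Set.Iic_union_Ioi] at h
  have h2 : ((ν.mass : ℝ≥0) : ℝ≥0∞) = ((ν (Set.Iic x) + ν (Set.Ioi x) : ℝ≥0) : ℝ≥0∞) := by
    push_cast
    rw [FiniteMeasure.ennreal_mass, FiniteMeasure.ennreal_coeFn_eq_coeFn_toMeasure,
      FiniteMeasure.ennreal_coeFn_eq_coeFn_toMeasure]
    exact h
  have h3 : ν.mass = ν (Set.Iic x) + ν (Set.Ioi x) := by exact_mod_cast h2
  rw [h3]
  push_cast
  ring

/-- Right-continuity of `s ↦ β_s((x,∞))` from weak right-continuity and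
monotonicity of the family against bounded continuous test functions. -/
lemma eta_rightCont {β : ℝ → FiniteMeasure ℝ≥0} {x : ℝ≥0} {t : ℝ}
    (hcont : ContinuousWithinAt β (Set.Ici t) t)
    (hmon : ∀ s : ℝ, t ≤ s → ∀ f : ℝ≥0 →ᵇ ℝ≥0, (β t).testAgainstNN f ≤ (β s).testAgainstNN f) :
    ContinuousWithinAt (fun s => ((β s) (Set.Ioi x) : ℝ)) (Set.Ici t) t := by
  have hM : ContinuousWithinAt (fun s => ((β s).mass : ℝ)) (Set.Ici t) t :=
    (NNReal.continuous_coe.comp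
      MeasureTheory.FiniteMeasure.continuous_mass).continuousAt.comp_continuousWithinAt hcont
  have hupper : Tendsto (fun s => ((β t) (Set.Ioi x) : ℝ) + (((β s).mass : ℝ) - ((β t).mass : ℝ)))
      (𝓝[Set.Ici t] t) (𝓝 ((β t) (Set.Ioi x) : ℝ)) := by
    have : Tendsto (fun s => ((β t) (Set.Ioi x) : ℝ) + (((β s).mass : ℝ) - ((β t).mass : ℝ)))
        (𝓝[Set.Ici t] t) (𝓝 (((β t) (Set.Ioi x) : ℝ) + (((β t).mass : ℝ) - ((β t).mass : ℝ)))) :=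
      tendsto_const_nhds.add (hM.sub tendsto_const_nhds)
    simpa using this
  refine tendsto_of_tendsto_of_tendsto_of_le_of_le' tendsto_const_nhds hupper ?_ ?_
  · filter_upwards [self_mem_nhdsWithin] with s (hs : t ≤ s)
    exact fm_Ioi_mono (hmon s hs) x
  · filter_upwards [self_mem_nhdsWithin] with s (hs : t ≤ s)
    have h1 := fm_partition (β s) x
    have h2 := fm_partition (β t) x
    have h3 := fm_Iic_mono (hmon s hs) x
    linarith

end MVSPAux

namespace MVSPAux

lemma iUnion_Iic_nat : (⋃ n : ℕ, Set.Iic ((n : ℝ≥0))) = Set.univ := by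
  ext y
  simp only [Set.mem_iUnion, Set.mem_Iic, Set.mem_univ, iff_true]
  exact ⟨⌈y⌉₊, Nat.le_ceil y⟩

lemma iInter_Ioi_nat : (⋂ n : ℕ, Set.Ioi ((n : ℝ≥0))) = (∅ : Set ℝ≥0) := by
  ext y
  simp only [Set.mem_iInter, Set.mem_Ioi, Set.mem_empty_iff_false, iff_false, not_forall, not_lt]
  obtain ⟨n, hn⟩ := exists_nat_ge y
  exact ⟨n, hn⟩

lemma fm_coe_toReal (ν : FiniteMeasure ℝ≥0) (s : Set ℝ≥0) :
    (ν s : ℝ) = ((ν : Measure ℝ≥0) s).toReal := rfl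

lemma tendsto_fm_Iic (ν : FiniteMeasure ℝ≥0) :
    Tendsto (fun n : ℕ => (ν (Set.Iic (n : ℝ≥0)) : ℝ)) atTop (𝓝 (ν Set.univ : ℝ)) := by
  have hmono : Monotone fun n : ℕ => Set.Iic ((n : ℝ≥0)) := fun n k h =>
    Set.Iic_subset_Iic.mpr (by exact_mod_cast h)
  have h1 := tendsto_measure_iUnion_atTop (μ := (ν : Measure ℝ≥0)) hmono
  rw [iUnion_Iic_nat] at h1
  have h2 := (ENNReal.tendsto_toReal (measure_ne_top (ν : Measure ℝ≥0) Set.univ)).comp h1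
  simpa only [Function.comp_def, fm_coe_toReal] using h2

lemma tendsto_fm_Ioi (ν : FiniteMeasure ℝ≥0) :
    Tendsto (fun n : ℕ => (ν (Set.Ioi (n : ℝ≥0)) : ℝ)) atTop (𝓝 0) := by
  have hant : Antitone fun n : ℕ => Set.Ioi ((n : ℝ≥0)) := fun n k h =>
    Set.Ioi_subset_Ioi (by exact_mod_cast h)
  have h1 := tendsto_measure_iInter_atTop (μ := (ν : Measure ℝ≥0))
    (fun n => measurableSet_Ioi.nullMeasurableSet) hant ⟨0, measure_ne_top _ _⟩
  rw [iInter_Ioi_nat, measure_empty] at h1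
  have h2 := (ENNReal.tendsto_toReal (by simp : (0:ℝ≥0∞) ≠ ⊤)).comp h1
  simpa only [Function.comp_def, fm_coe_toReal, ENNReal.toReal_zero] using h2

lemma fm_univ_null (ν : FiniteMeasure ℝ≥0)
    (h : ∀ n : ℕ, (ν (Set.Iic (n : ℝ≥0)) : ℝ) = 0) : (ν Set.univ : ℝ) = 0 := by
  have hz : (ν : Measure ℝ≥0) Set.univ = 0 := by
    rw [← iUnion_Iic_nat]
    refine measure_iUnion_null fun n => ?_
    have h1 : ν (Set.Iic (n : ℝ≥0)) = 0 := by exact_mod_cast h n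
    exact (FiniteMeasure.null_iff_toMeasure_null ν _).mp h1
  rw [fm_coe_toReal, hz, ENNReal.toReal_zero]

end MVSPAux

/-- Further Skorokhod-map identities satisfied by any solution of the MVSP:
`(ξ[0,∞), ι) = Γ[α[0,∞) − μ]` and
`(ξ[0,x], β((x,∞))) = Γ[α[0,x] − μ + ι]` for every `x ≥ 0`. -/
theorem mvsp_skorokhod_identities
    (α ξ β : ℝ → FiniteMeasure ℝ≥0) (μ ι : ℝ → ℝ)
    (hα : DMup α) (hμ : DRup μ) (hξ : DM ξ) (hβ : DMup β) (hι : DRup ι)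
    (hsol : SolvesMVSP α μ ξ β ι) :
    (∀ t : ℝ, 0 ≤ t →
      (ξ t Set.univ : ℝ) = Gamma1 (fun s => (α s Set.univ : ℝ) - μ s) t ∧
      ι t = Gamma2 (fun s => (α s Set.univ : ℝ) - μ s) t) ∧
    (∀ x : ℝ≥0, ∀ t : ℝ, 0 ≤ t →
      (ξ t (Set.Iic x) : ℝ) = Gamma1 (fun s => (α s (Set.Iic x) : ℝ) - μ s + ι s) t ∧
      (β t (Set.Ioi x) : ℝ) = Gamma2 (fun s => (α s (Set.Iic x) : ℝ) - μ s + ι s) t) := by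
  obtain ⟨heq1, hae_x, hae_i, _hbal⟩ := hsol
  constructor
  · intro t ht
    have hkey : ∀ s : ℝ, 0 ≤ s →
        (ξ s Set.univ : ℝ) = ((α s Set.univ : ℝ) - μ s) + ι s := by
      intro s hs
      have hrhs : Tendsto (fun n : ℕ =>
          (α s (Set.Iic (n:ℝ≥0)) : ℝ) - μ s + (β s (Set.Ioi (n:ℝ≥0)) : ℝ) + ι s) atTop
          (𝓝 ((α s Set.univ : ℝ) - μ s + 0 + ι s)) :=
        (((MVSPAux.tendsto_fm_Iic (α s)).sub_const (μ s)).add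
          (MVSPAux.tendsto_fm_Ioi (β s))).add_const (ι s)
      have hlhs : Tendsto (fun n : ℕ => (ξ s (Set.Iic (n:ℝ≥0)) : ℝ)) atTop
          (𝓝 ((α s Set.univ : ℝ) - μ s + 0 + ι s)) :=
        hrhs.congr (fun n => (heq1 (n:ℝ≥0) s hs).symm)
      have := tendsto_nhds_unique (MVSPAux.tendsto_fm_Iic (ξ s)) hlhs
      linarith
    have hae_univ : ∀ᵐ s ∂(lsMeasure ι), (ξ s Set.univ : ℝ) = 0 := by
      have h := ae_all_iff.mpr (fun n : ℕ => hae_i ((n:ℝ≥0)))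
      filter_upwards [h] with s hs
      exact MVSPAux.fm_univ_null (ξ s) hs
    exact MVSPAux.skorokhod_char (fun u => (α u Set.univ : ℝ) - μ u)
      (fun u => (ξ u Set.univ : ℝ)) ι hι.2.1 hι.2.2 (fun u hu => hι.1.1 u hu)
      hkey (fun u _ => NNReal.coe_nonneg _) hae_univ ht
  · intro x t ht
    have hmon : ∀ {a b : ℝ}, 0 ≤ a → a ≤ b → ∀ f : ℝ≥0 →ᵇ ℝ≥0,
        (β a).testAgainstNN f ≤ (β b).testAgainstNN f := by
      intro a b ha hab f
      exact hβ.2 f ha (ha.trans hab) hab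
    exact MVSPAux.skorokhod_char (fun u => (α u (Set.Iic x) : ℝ) - μ u + ι u)
      (fun u => (ξ u (Set.Iic x) : ℝ)) (fun u => (β u (Set.Ioi x) : ℝ))
      (fun u _ => NNReal.coe_nonneg _)
      (fun a ha b hb hab => MVSPAux.fm_Ioi_mono (fun f => hmon ha hab f) x)
      (fun u hu => MVSPAux.eta_rightCont (hβ.1.1 u hu) (fun v hv f => hmon hu hv f))
      (fun u hu => by have := heq1 x u hu; linarith)
      (fun u _ => NNReal.coe_nonneg _) (hae_x x) ht

end
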